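/- Let a < b be real numbers and let φ : [a,b] → ℝ be a function of bounded variation which is right continuous, with φ(a) = 0 and total variation V_a^b φ = 1. Let v(x) = V_a^x φ be the total variation function of φ, and let p = (v + φ)/2 and n = (v − φ)/2 be the positive and negative variation functions of φ. Then there exist a sequence (x_k)_{k≥1} of points of [a,b] and a sequence of signs (ε_k)_{k≥1} with each ε_k ∈ {−1, +1} such that for every point x ∈ [a,b] at which φ is continuous: (a) (1/N)·Σ_{k=1}^N χ_{[a,x)}(x_k) → v(x); (b) (1/N)·Σ_{k=1}^N ε_k·χ_{[a,x)}(x_k) → φ(x); (c) (1/(2N))·Σ_{k=1}^N (1+ε_k)·χ_{[a,x)}(x_k) → p(x); and (d) (1/(2N))·Σ_{k=1}^N (1−ε_k)·χ_{[a,x)}(x_k) → n(x), as N → ∞. -/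

import Mathlib

open Filter Finset


/-- binary van der Corput sequence -/
noncomputable def vdc : ℕ → ℝ
  | 0 => 0
  | (k+1) => (((k+1) % 2 : ℕ) + vdc ((k+1)/2)) / 2
decreasing_by exact Nat.div_lt_self (Nat.succ_pos k) one_lt_two

lemma vdc_def (k : ℕ) : vdc k = ((k % 2 : ℕ) + vdc (k/2)) / 2 := by
  cases k with
  | zero => simp [vdc]
  | succ n => rw [vdc]

lemma vdc_nonneg (k : ℕ) : 0 ≤ vdc k := by
  induction k using Nat.strong_induction_on with
  | _ k ih =>
    cases k with
    | zero => simp [vdc]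
    | succ n =>
      rw [vdc_def]
      have := ih ((n+1)/2) (Nat.div_lt_self (Nat.succ_pos n) one_lt_two)
      positivity

lemma vdc_lt_one (k : ℕ) : vdc k < 1 := by
  induction k using Nat.strong_induction_on with
  | _ k ih =>
    cases k with
    | zero => simp [vdc]
    | succ n =>
      rw [vdc_def]
      have h1 := ih ((n+1)/2) (Nat.div_lt_self (Nat.succ_pos n) one_lt_two)
      have h2 : ((n+1) % 2 : ℕ) ≤ 1 := Nat.le_of_lt_succ (Nat.mod_lt _ two_pos)
      have h2' : (((n+1) % 2 : ℕ) : ℝ) ≤ 1 := by exact_mod_cast h2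
      linarith

lemma vdc_pow_add {s r : ℕ} (hr : r < 2^s) :
    vdc (2^s + r) = vdc r + (2:ℝ)⁻¹^(s+1) := by
  induction s generalizing r with
  | zero =>
    interval_cases r
    show vdc 1 = _
    rw [vdc_def]
    norm_num [vdc]
  | succ s ih =>
    have hmod : (2^(s+1) + r) % 2 = r % 2 := by
      omega
    have hdiv : (2^(s+1) + r) / 2 = 2^s + r/2 := by
      omega
    have hr2 : r / 2 < 2^s := by omega
    rw [vdc_def, hmod, hdiv, ih hr2, vdc_def r]
    ring

lemma vdc_half_le {k : ℕ} (hk : k % 2 = 1) : (2:ℝ)⁻¹ ≤ vdc k := by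
  rw [vdc_def, hk]
  have := vdc_nonneg (k/2)
  push_cast
  linarith

lemma vdc_lt_half {k : ℕ} (hk : k % 2 = 0) : vdc k < 2⁻¹ := by
  rw [vdc_def, hk]
  have := vdc_lt_one (k/2)
  push_cast
  linarith

lemma vdc_pos {k : ℕ} (hk : 0 < k) : 0 < vdc k := by
  induction k using Nat.strong_induction_on with
  | _ k ih =>
    rcases Nat.mod_two_eq_zero_or_one k with h2 | h2
    · have hk2 : 0 < k / 2 := by omega
      have := ih (k/2) (Nat.div_lt_self hk one_lt_two) hk2
      rw [vdc_def, h2]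
      push_cast
      linarith
    · have := vdc_half_le h2
      linarith [this]

lemma vdc_injective : Function.Injective vdc := by
  intro m n h
  induction m using Nat.strong_induction_on generalizing n with
  | _ m ih =>
    have hpar : m % 2 = n % 2 := by
      rcases Nat.mod_two_eq_zero_or_one m with hm | hm <;>
      rcases Nat.mod_two_eq_zero_or_one n with hn | hn
      · rw [hm, hn]
      · exact absurd (h ▸ vdc_half_le hn) (not_le.2 (vdc_lt_half hm))
      · exact absurd (h.symm ▸ vdc_half_le hm) (not_le.2 (vdc_lt_half hn))
      · rw [hm, hn]
    have hdiv : vdc (m/2) = vdc (n/2) := by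
      rw [vdc_def m, vdc_def n, hpar] at h
      have : ((n % 2 : ℕ) : ℝ) + vdc (m/2) = ((n % 2 : ℕ) : ℝ) + vdc (n/2) := by
        field_simp at h; linarith
      linarith
    rcases Nat.eq_zero_or_pos m with rfl | hm
    · rcases Nat.eq_zero_or_pos n with rfl | hn
      · rfl
      · exact absurd h.symm (ne_of_gt (by simpa [vdc] using vdc_pos hn))
    · have h2 := ih (m/2) (Nat.div_lt_self hm one_lt_two) hdiv
      omega
lemma nat_le_ceil {n : ℕ} {x : ℝ} (h : (n:ℝ) ≤ x) : n ≤ ⌈x⌉₊ := by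
  have := Nat.ceil_le_ceil (R := ℝ) h
  rwa [Nat.ceil_natCast] at this

noncomputable def vcnt (N : ℕ) (c : ℝ) : ℕ :=
  ((Finset.range N).filter (fun k => vdc k < c)).card

lemma vcnt_zero_of_nonpos {c : ℝ} (hc : c ≤ 0) (N : ℕ) : vcnt N c = 0 := by
  unfold vcnt
  rw [Finset.card_eq_zero, Finset.filter_eq_empty_iff]
  intro k _
  exact not_lt.2 (hc.trans (vdc_nonneg k))

lemma vcnt_le_card (N : ℕ) (c : ℝ) : vcnt N c ≤ N := by
  simpa [vcnt] using Finset.card_filter_le (Finset.range N) _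

lemma vcnt_all {c : ℝ} (hc : 1 ≤ c) (N : ℕ) : vcnt N c = N := by
  unfold vcnt
  rw [Finset.filter_true_of_mem, Finset.card_range]
  exact fun k _ => (vdc_lt_one k).trans_le hc

lemma vcnt_split {s r : ℕ} (hr : r ≤ 2^s) (c : ℝ) :
    vcnt (2^s + r) c = vcnt (2^s) c + vcnt r (c - (2:ℝ)⁻¹^(s+1)) := by
  classical
  unfold vcnt
  have hsplit : Finset.range (2^s + r) =
      Finset.range (2^s) ∪ (Finset.range r).map ⟨fun k => 2^s + k, add_right_injective _⟩ := by
    ext k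
    simp only [Finset.mem_union, Finset.mem_range, Finset.mem_map, Function.Embedding.coeFn_mk]
    constructor
    · intro hk
      rcases lt_or_ge k (2^s) with h | h
      · exact Or.inl h
      · exact Or.inr ⟨k - 2^s, by omega, by omega⟩
    · rintro (h | ⟨j, hj, rfl⟩) <;> omega
  rw [hsplit, Finset.filter_union, Finset.card_union_of_disjoint, Finset.filter_map,
    Finset.card_map]
  · congr 1
    apply Finset.card_nbij' id id
    · intro j hj
      simp only [Finset.mem_coe, Finset.mem_filter, Finset.mem_range, Function.comp,
        Function.Embedding.coeFn_mk, id] at hj ⊢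
      have := vdc_pow_add (show j < 2^s by omega)
      constructor
      · exact hj.1
      · rw [this] at hj; linarith [hj.2]
    · intro j hj
      simp only [Finset.mem_coe, Finset.mem_filter, Finset.mem_range, Function.comp,
        Function.Embedding.coeFn_mk, id] at hj ⊢
      have := vdc_pow_add (show j < 2^s by omega)
      exact ⟨hj.1, by rw [this]; linarith [hj.2]⟩
    · intro j _; rfl
    · intro j _; rfl
  · apply Finset.disjoint_filter_filter
    rw [Finset.disjoint_left]
    intro k hk hk2
    simp only [Finset.mem_range] at hk
    simp only [Finset.mem_map, Function.Embedding.coeFn_mk] at hk2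
    obtain ⟨j, _, hj⟩ := hk2
    omega

/-- ceiling identity -/
lemma ceil_split {K : ℕ} {t : ℝ} :
    min (2*K) ⌈2*t⌉₊ = min K ⌈t⌉₊ + min K ⌈t - 2⁻¹⌉₊ := by
  rcases le_or_gt t 0 with ht | ht
  · have h1 : ⌈2*t⌉₊ = 0 := Nat.ceil_eq_zero.2 (by linarith)
    have h2 : ⌈t⌉₊ = 0 := Nat.ceil_eq_zero.2 ht
    have h3 : ⌈t - 2⁻¹⌉₊ = 0 := Nat.ceil_eq_zero.2 (by linarith)
    simp [h1, h2, h3]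
  rcases Nat.eq_zero_or_pos K with rfl | hK
  · simp
  rcases le_or_gt (K : ℝ) t with hKt | hKt
  · have h1 : min (2*K) ⌈2*t⌉₊ = 2*K :=
      min_eq_left (nat_le_ceil (by push_cast; linarith))
    have h2 : min K ⌈t⌉₊ = K := min_eq_left (nat_le_ceil (by linarith))
    have h3 : min K ⌈t - 2⁻¹⌉₊ = K := min_eq_left (by
      have hlt : ((K - 1 : ℕ) : ℝ) < t - 2⁻¹ := by
        rw [Nat.cast_sub hK]; push_cast; linarith
      have := Nat.lt_ceil.2 hlt
      omega)
    omega
  · -- 0 < t < K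
    have h2t : 2*t < 2*K := by linarith
    have hc1 : ⌈t⌉₊ ≤ K := Nat.ceil_le.2 (le_of_lt hKt)
    have hc2 : ⌈t - 2⁻¹⌉₊ ≤ K := Nat.ceil_le.2 (by linarith)
    have hc3 : ⌈2*t⌉₊ ≤ 2*K := by
      have : ((2*K : ℕ) : ℝ) = 2*K := by push_cast; ring
      exact Nat.ceil_le.2 (by rw [this]; linarith)
    rw [min_eq_right hc3, min_eq_right hc1, min_eq_right hc2]
    -- identity ⌈2t⌉ = ⌈t⌉ + ⌈t - 1/2⌉ for t > 0
    set n := ⌈2*t⌉₊ with hn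
    have hnpos : 0 < n := Nat.ceil_pos.2 (by linarith)
    have hub : 2*t ≤ n := Nat.le_ceil _
    have hlb : (n:ℝ) - 1 < 2*t := by
      have := Nat.ceil_lt_add_one (show (0:ℝ) ≤ 2*t by linarith)
      linarith
    rcases Nat.even_or_odd n with ⟨q, hq⟩ | ⟨q, hq⟩
    · have hq1 : ⌈t⌉₊ = q := by
        have hqpos : 0 < q := by omega
        rw [Nat.ceil_eq_iff (by omega)]
        constructor
        · push_cast; rw [Nat.cast_sub hqpos]; push_cast
          rw [hq] at hlb; push_cast at hlb; linarith
        · rw [hq] at hub; push_cast at hub ⊢; linarith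
      have hq2 : ⌈t - 2⁻¹⌉₊ = q := by
        have hqpos : 0 < q := by omega
        rw [Nat.ceil_eq_iff (by omega)]
        constructor
        · rw [Nat.cast_sub hqpos]; push_cast
          rw [hq] at hlb; push_cast at hlb; linarith
        · rw [hq] at hub; push_cast at hub ⊢; linarith
      omega
    · have hq1 : ⌈t⌉₊ = q + 1 := by
        rw [Nat.ceil_eq_iff (by omega)]
        constructor
        · push_cast
          rw [hq] at hlb; push_cast at hlb; linarith
        · rw [hq] at hub; push_cast at hub ⊢; linarith
      have hq2 : ⌈t - 2⁻¹⌉₊ = q := by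
        rcases Nat.eq_zero_or_pos q with rfl | hqpos
        · rw [Nat.ceil_eq_zero]
          rw [hq] at hub; push_cast at hub; linarith
        · rw [Nat.ceil_eq_iff (by omega)]
          constructor
          · rw [Nat.cast_sub hqpos]; push_cast
            rw [hq] at hlb; push_cast at hlb; linarith
          · rw [hq] at hub; push_cast at hub ⊢; linarith
      omega

lemma vcnt_grid (m : ℕ) (c : ℝ) : vcnt (2^m) c = min (2^m) ⌈(2^m : ℝ) * c⌉₊ := by
  induction m generalizing c with
  | zero =>
    simp only [pow_zero, one_mul]
    rcases le_or_gt c 0 with hc | hc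
    · rw [vcnt_zero_of_nonpos hc, Nat.ceil_eq_zero.2 hc]
      simp
    · have : vcnt 1 c = 1 := by
        unfold vcnt
        rw [Finset.range_one, Finset.filter_singleton, if_pos (by simpa [vdc] using hc)]
        simp
      rw [this]
      have : 1 ≤ ⌈c⌉₊ := Nat.ceil_pos.2 hc
      omega
  | succ m ih =>
    have h2 : (2:ℕ)^(m+1) = 2^m + 2^m := by ring
    rw [h2, vcnt_split (le_refl (2^m)), ih, ih]
    have hcast : ((2:ℝ)^(m+1)) * c = 2 * ((2:ℝ)^m * c) := by ring
    have hsub : (2:ℝ)^m * (c - (2:ℝ)⁻¹^(m+1)) = (2:ℝ)^m * c - 2⁻¹ := by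
      rw [mul_sub]
      congr 1
      rw [pow_succ, ← mul_assoc, ← mul_pow]
      norm_num
    push_cast
    rw [hcast, hsub, ← ceil_split]
    congr 1
    push_cast
    ring
noncomputable def vErr (N : ℕ) : ℝ := 2 * (Nat.log 2 N + 1)

lemma vErr_mono {M N : ℕ} (h : M ≤ N) : vErr M ≤ vErr N := by
  unfold vErr
  have := Nat.log_mono_right (b := 2) h
  have : (Nat.log 2 M : ℝ) ≤ Nat.log 2 N := by exact_mod_cast this
  linarith

lemma vcnt_grid_up (m : ℕ) (c : ℝ) : (vcnt (2^m) c : ℝ) ≤ (2:ℝ)^m * max c 0 + 1 := by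
  rcases le_or_gt c 0 with hc | hc
  · rw [vcnt_zero_of_nonpos hc]
    have : (0:ℝ) ≤ (2:ℝ)^m * max c 0 := by positivity
    simp only [Nat.cast_zero]; linarith
  · rw [vcnt_grid, max_eq_left hc.le]
    have h1 : (min (2^m) ⌈(2^m:ℝ)*c⌉₊ : ℕ) ≤ ⌈(2^m:ℝ)*c⌉₊ := min_le_right _ _
    have h2 : (⌈(2^m:ℝ)*c⌉₊ : ℝ) < (2:ℝ)^m * c + 1 := by
      have := Nat.ceil_lt_add_one (show (0:ℝ) ≤ (2:ℝ)^m * c by positivity)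
      push_cast at this ⊢
      convert this using 2 <;> push_cast <;> ring
    calc ((min (2^m) ⌈(2^m:ℝ)*c⌉₊ : ℕ) : ℝ) ≤ (⌈(2^m:ℝ)*c⌉₊ : ℝ) := by exact_mod_cast h1
    _ ≤ (2:ℝ)^m * c + 1 := h2.le

lemma vcnt_grid_lo (m : ℕ) (c : ℝ) : (2:ℝ)^m * min c 1 - 1 ≤ (vcnt (2^m) c : ℝ) := by
  rcases le_or_gt 1 c with hc | hc
  · rw [vcnt_all hc, min_eq_right hc]
    push_cast
    linarith
  · rw [vcnt_grid, min_eq_left hc.le]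
    have h1 : (2:ℝ)^m * c ≤ (min (2^m) ⌈(2^m:ℝ)*c⌉₊ : ℕ) := by
      rcases le_or_gt ((2:ℝ)^m * c) 0 with h0 | h0
      · exact h0.trans (by positivity)
      · have ha : (2:ℝ)^m * c ≤ (⌈(2^m:ℝ)*c⌉₊ : ℝ) := by
          have := Nat.le_ceil ((2^m:ℝ)*c)
          push_cast at this ⊢
          convert this using 2 <;> push_cast <;> ring
        have hb : (2:ℝ)^m * c ≤ ((2^m : ℕ) : ℝ) := by
          push_cast
          nlinarith [pow_pos (show (0:ℝ) < 2 by norm_num) m]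
        rcases min_cases (2^m : ℕ) ⌈(2^m:ℝ)*c⌉₊ with ⟨h, _⟩ | ⟨h, _⟩ <;> rw [h]
        · exact hb
        · exact ha
    linarith

lemma vcnt_bounds (N : ℕ) (c : ℝ) :
    (N:ℝ) * min c 1 - vErr N ≤ (vcnt N c : ℝ) ∧ (vcnt N c : ℝ) ≤ (N:ℝ) * max c 0 + vErr N := by
  induction N using Nat.strong_induction_on generalizing c with
  | _ N ih =>
    rcases Nat.eq_zero_or_pos N with rfl | hN
    · constructor
      · simp only [Nat.cast_zero, zero_mul, vErr]
        have : (vcnt 0 c : ℝ) ≥ 0 := Nat.cast_nonneg _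
        simp only [Nat.log_zero_right, Nat.cast_zero]
        linarith
      · simp only [vcnt, Finset.range_zero, Finset.filter_empty, Finset.card_empty, Nat.cast_zero,
          zero_mul, vErr, Nat.log_zero_right]
        linarith
    set s := Nat.log 2 N with hs
    have h2s : 2^s ≤ N := Nat.pow_log_le_self 2 (by omega)
    have hN2 : N < 2^(s+1) := Nat.lt_pow_succ_log_self one_lt_two N
    have hvErr : vErr N = 2*(s+1) := by unfold vErr; push_cast; ring
    rcases eq_or_lt_of_le h2s with heq | hlt
    · -- N = 2^s
      have hNe : N = 2^s := heq.symm
      constructor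
      · have := vcnt_grid_lo s c
        rw [hvErr, hNe]
        push_cast at this ⊢
        nlinarith [this]
      · have := vcnt_grid_up s c
        rw [hvErr, hNe]
        push_cast at this ⊢
        nlinarith [this]
    · -- 2^s < N < 2^(s+1)
      set r := N - 2^s with hr
      have hrge : 1 ≤ r := by omega
      have hrlt : r < 2^s := by
        have : 2^(s+1) = 2^s + 2^s := by ring
        omega
      have hNr : N = 2^s + r := by omega
      have hlogr : Nat.log 2 r < s := Nat.log_lt_of_lt_pow (by omega) hrlt
      have hErr_r : vErr r ≤ 2*s := by
        unfold vErr
        have : (Nat.log 2 r : ℝ) + 1 ≤ s := by exact_mod_cast hlogr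
        linarith
      set δ : ℝ := (2:ℝ)⁻¹^(s+1) with hδ
      have hδpos : 0 < δ := by positivity
      have hδr : (r:ℝ) * δ ≤ 1/2 := by
        have h1 : (r:ℝ) ≤ (2:ℝ)^s := by exact_mod_cast hrlt.le
        have h2 : (2:ℝ)^s * δ = 1/2 := by
          rw [hδ, pow_succ, ← mul_assoc, ← mul_pow]
          norm_num
        nlinarith
      have hsplit := vcnt_split (c := c) hrlt.le
      have ihr := ih r (by omega) (c - δ)
      have hgu := vcnt_grid_up s c
      have hgl := vcnt_grid_lo s c
      have hcast : (vcnt N c : ℝ) = (vcnt (2^s) c : ℝ) + (vcnt r (c - δ) : ℝ) := by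
        rw [hNr, hsplit]; push_cast; ring
      have hNcast : (N:ℝ) = (2:ℝ)^s + r := by
        rw [hNr]; push_cast; ring
      constructor
      · have hmin : min c 1 - δ ≤ min (c - δ) 1 := by
          rcases min_cases (c - δ) 1 with ⟨h, _⟩ | ⟨h, _⟩ <;> rw [h] <;>
          rcases min_cases c 1 with ⟨h', _⟩ | ⟨h', _⟩ <;> rw [h'] <;> linarith
        have hminle : min c 1 ≤ 1 := min_le_right _ _
        have h1 : (r:ℝ) * min (c - δ) 1 - vErr r ≤ (vcnt r (c-δ) : ℝ) := ihr.1
        have h2 : (r:ℝ) * min (c - δ) 1 ≥ (r:ℝ) * (min c 1 - δ) := by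
          apply mul_le_mul_of_nonneg_left hmin (by positivity)
        rw [hcast, hNcast, hvErr]
        have hrpos : (0:ℝ) ≤ r := Nat.cast_nonneg r
        nlinarith [hgl, h1, h2, hδr, hErr_r]
      · have hmax : max (c - δ) 0 ≤ max c 0 := by
          rcases max_cases (c - δ) 0 with ⟨h, _⟩ | ⟨h, _⟩ <;> rw [h] <;>
          rcases max_cases c 0 with ⟨h', _⟩ | ⟨h', _⟩ <;> rw [h'] <;> linarith
        have h1 : (vcnt r (c-δ) : ℝ) ≤ (r:ℝ) * max (c - δ) 0 + vErr r := ihr.2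
        have h2 : (r:ℝ) * max (c - δ) 0 ≤ (r:ℝ) * max c 0 := by
          apply mul_le_mul_of_nonneg_left hmax (by positivity)
        rw [hcast, hNcast, hvErr]
        nlinarith [hgu, h1, h2, hErr_r]

lemma tendsto_vErr_div : Filter.Tendsto (fun N : ℕ => (vErr N + 1) / N) Filter.atTop (nhds 0) := by
  have hlog : ∀ N : ℕ, 1 ≤ N → (Nat.log 2 N : ℝ) ≤ Real.log N / Real.log 2 := by
    intro N hN
    have h1 : (2:ℝ)^(Nat.log 2 N) ≤ N := by exact_mod_cast Nat.pow_log_le_self 2 (by omega)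
    have h2 : Real.log ((2:ℝ)^(Nat.log 2 N)) ≤ Real.log N :=
      Real.log_le_log (by positivity) h1
    rw [Real.log_pow] at h2
    rw [le_div_iff₀ (Real.log_pos (by norm_num))]
    exact h2
  have hlogdiv : Filter.Tendsto (fun x : ℝ => Real.log x / x) Filter.atTop (nhds 0) := by
    have := Real.tendsto_pow_log_div_mul_add_atTop 1 0 1 one_ne_zero
    simpa using this
  have hg : Filter.Tendsto
      (fun x : ℝ => (2 / Real.log 2) * (Real.log x / x) + 3 * x⁻¹) Filter.atTop (nhds 0) := by
    have h3 : Filter.Tendsto (fun x : ℝ => 3 * x⁻¹) Filter.atTop (nhds 0) := by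
      simpa using tendsto_inv_atTop_zero.const_mul (3:ℝ)
    simpa using (hlogdiv.const_mul (2 / Real.log 2)).add h3
  have hgn : Filter.Tendsto
      (fun N : ℕ => (2 / Real.log 2) * (Real.log N / N) + 3 * (N:ℝ)⁻¹)
      Filter.atTop (nhds 0) := hg.comp tendsto_natCast_atTop_atTop
  apply squeeze_zero' (g := fun N : ℕ => (2 / Real.log 2) * (Real.log N / N) + 3 * (N:ℝ)⁻¹)
  · filter_upwards [Filter.eventually_ge_atTop 1] with N hN
    have hNpos : (0:ℝ) < N := by exact_mod_cast hN
    have hln : (0:ℝ) ≤ Real.log N := Real.log_nonneg (by exact_mod_cast hN)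
    have hlog2 : (0:ℝ) < Real.log 2 := Real.log_pos (by norm_num)
    have hv : (0:ℝ) ≤ vErr N := by unfold vErr; positivity
    exact div_nonneg (by linarith) hNpos.le
  · filter_upwards [Filter.eventually_ge_atTop 1] with N hN
    have hNpos : (0:ℝ) < N := by exact_mod_cast hN
    have hl := hlog N hN
    have hlog2 : (0:ℝ) < Real.log 2 := Real.log_pos (by norm_num)
    rw [vErr]
    rw [div_le_iff₀ hNpos] at *
    have hln : (0:ℝ) ≤ Real.log N := Real.log_nonneg (by exact_mod_cast hN)
    calc 2 * ((Nat.log 2 N : ℝ) + 1) + 1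
        ≤ 2 * (Real.log N / Real.log 2) + 3 := by linarith
      _ = ((2 / Real.log 2) * (Real.log N / N) + 3 * (N:ℝ)⁻¹) * N := by
          field_simp
  · exact hgn
lemma tendsto_of_abs_le {f g : ℕ → ℝ} {L : ℝ}
    (h : ∀ᶠ N in Filter.atTop, |f N - L| ≤ g N)
    (hg : Filter.Tendsto g Filter.atTop (nhds 0)) :
    Filter.Tendsto f Filter.atTop (nhds L) := by
  rw [tendsto_iff_dist_tendsto_zero]
  apply squeeze_zero' (Filter.Eventually.of_forall (fun N => dist_nonneg)) _ hg
  simpa [Real.dist_eq] using h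

lemma count_transfer (F : ℕ → ℕ) (hF0 : F 0 = 0)
    (hstep : ∀ k, F (k+1) = F k ∨ F (k+1) = F k + 1)
    (P : ℕ → Prop) [DecidablePred P] (N : ℕ) :
    ((Finset.range N).filter (fun k => F (k+1) = F k + 1 ∧ P (F k))).card
      = ((Finset.range (F N)).filter P).card := by
  induction N with
  | zero => simp [hF0]
  | succ N ih =>
    rw [Finset.range_add_one, Finset.filter_insert]
    rcases hstep N with h | h
    · rw [if_neg (by simp [h]), ih, h]
    · rw [h, Finset.range_add_one, Finset.filter_insert]
      by_cases hP : P (F N)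
      · rw [if_pos ⟨rfl, hP⟩, if_pos hP, Finset.card_insert_of_notMem (by simp),
          Finset.card_insert_of_notMem (by simp), ih]
      · rw [if_neg (by simp [hP]), if_neg hP, ih]

noncomputable def Fl (α : ℝ) (k : ℕ) : ℕ := (⌊(k:ℝ)*α⌋).toNat

lemma Fl_zero (α : ℝ) : Fl α 0 = 0 := by simp [Fl]

lemma Fl_cast {α : ℝ} (hα : 0 ≤ α) (k : ℕ) : ((Fl α k : ℕ) : ℝ) = ⌊(k:ℝ)*α⌋ := by
  unfold Fl
  have h : (0:ℤ) ≤ ⌊(k:ℝ)*α⌋ := Int.le_floor.2 (by push_cast; exact mul_nonneg (Nat.cast_nonneg k) hα)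
  exact_mod_cast congrArg (Int.cast : ℤ → ℝ) (Int.toNat_of_nonneg h)

lemma Fl_step {α : ℝ} (h0 : 0 ≤ α) (h1 : α ≤ 1) (k : ℕ) :
    Fl α (k+1) = Fl α k ∨ Fl α (k+1) = Fl α k + 1 := by
  have hle : ⌊(k:ℝ)*α⌋ ≤ ⌊((k+1:ℕ):ℝ)*α⌋ := by
    apply Int.floor_le_floor
    have : ((k:ℝ)) ≤ ((k+1:ℕ):ℝ) := by push_cast; linarith
    nlinarith
  have hlt : ⌊((k+1:ℕ):ℝ)*α⌋ ≤ ⌊(k:ℝ)*α⌋ + 1 := by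
    have : ((k+1:ℕ):ℝ)*α ≤ (k:ℝ)*α + 1 := by push_cast; nlinarith
    calc ⌊((k+1:ℕ):ℝ)*α⌋ ≤ ⌊(k:ℝ)*α + 1⌋ := Int.floor_le_floor this
    _ = ⌊(k:ℝ)*α⌋ + 1 := by rw [Int.floor_add_one]
  have hnn : (0:ℤ) ≤ ⌊(k:ℝ)*α⌋ := Int.le_floor.2 (by push_cast; exact mul_nonneg (Nat.cast_nonneg k) h0)
  unfold Fl
  omega

lemma Fl_le {α : ℝ} (h0 : 0 ≤ α) (h1 : α ≤ 1) (k : ℕ) : Fl α k ≤ k := by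
  unfold Fl
  have : ⌊(k:ℝ)*α⌋ ≤ k := by
    have : (k:ℝ)*α ≤ k := by nlinarith
    exact_mod_cast Int.floor_le_floor this |>.trans_eq (Int.floor_natCast k)
  omega

lemma Fl_tendsto {α : ℝ} (h0 : 0 ≤ α) :
    Filter.Tendsto (fun N : ℕ => (Fl α N : ℝ) / N) Filter.atTop (nhds α) := by
  apply tendsto_of_abs_le (g := fun N : ℕ => (N:ℝ)⁻¹)
  · filter_upwards [Filter.eventually_ge_atTop 1] with N hN
    have hNpos : (0:ℝ) < N := by exact_mod_cast hN
    rw [Fl_cast h0]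
    have hub : (⌊(N:ℝ)*α⌋ : ℝ) ≤ (N:ℝ)*α := Int.floor_le _
    have hlb : (N:ℝ)*α - 1 < (⌊(N:ℝ)*α⌋ : ℝ) := by
      have := Int.lt_floor_add_one ((N:ℝ)*α)
      linarith
    have e1 : ((N:ℝ)*α - 1)/N ≤ (⌊(N:ℝ)*α⌋ : ℝ)/N := by gcongr
    have e2 : (⌊(N:ℝ)*α⌋ : ℝ)/N ≤ ((N:ℝ)*α)/N := by gcongr
    have e3 : ((N:ℝ)*α)/N = α := by field_simp
    have e4 : ((N:ℝ)*α - 1)/N = α - (N:ℝ)⁻¹ := by field_simp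
    rw [e4] at e1
    rw [e3] at e2
    rw [abs_le]
    constructor <;> linarith
  · exact tendsto_inv_atTop_zero.comp tendsto_natCast_atTop_atTop
lemma abs_sub_le_var {φ : ℝ → ℝ} {s : Set ℝ} (hφ : LocallyBoundedVariationOn φ s) {x y : ℝ}
    (hx : x ∈ s) (hy : y ∈ s) (hxy : x ≤ y) : |φ y - φ x| ≤ variationOnFromTo φ s x y := by
  have h : dist (φ x) (φ y) ≤ variationOnFromTo φ s x y := by
    rw [variationOnFromTo.eq_of_le φ s hxy, dist_edist]
    apply ENNReal.toReal_mono (hφ x y hx hy)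
    apply eVariationOn.edist_le φ
    exacts [⟨hx, le_rfl, hxy⟩, ⟨hy, hxy, le_rfl⟩]
  rw [Real.dist_eq, abs_sub_comm] at h
  exact h

lemma var_left {a b x : ℝ} {φ : ℝ → ℝ} (hBV : BoundedVariationOn φ (Set.Icc a b))
    (hx : x ∈ Set.Icc a b) (hax : a < x)
    (hcont : ContinuousWithinAt φ (Set.Icc a b) x) {ε : ℝ} (hε : 0 < ε) :
    ∃ y ∈ Set.Ico a x, variationOnFromTo φ (Set.Icc a b) y x < ε := by
  set s := Set.Icc a b with hs
  have hlbv : LocallyBoundedVariationOn φ s := hBV.locallyBoundedVariationOn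
  set v : ℝ → ℝ := variationOnFromTo φ s a with hv
  have has : a ∈ s := Set.left_mem_Icc.2 (hx.1.trans hx.2)
  have hxs : x ∈ s := hx
  have hmem : ∀ t, t ∈ Set.Ico a x → t ∈ s := fun t ht => ⟨ht.1, ht.2.le.trans hx.2⟩
  have hvmono := variationOnFromTo.monotoneOn hlbv has
  -- supremum of v on [a, x)
  set T : Set ℝ := v '' Set.Ico a x with hT
  have hTne : T.Nonempty := ⟨v a, a, ⟨le_rfl, hax⟩, rfl⟩
  have hTbdd : BddAbove T := by
    refine ⟨v x, ?_⟩
    rintro w ⟨t, ht, rfl⟩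
    exact hvmono (hmem t ht) hxs ht.2.le
  set L : ℝ := sSup T with hL
  -- continuity data
  obtain ⟨δ, hδpos, hδ⟩ := Metric.continuousWithinAt_iff.1 hcont (ε/4) (by linarith)
  -- choose y
  obtain ⟨w, ⟨y₁, hy₁, rfl⟩, hwgt⟩ := exists_lt_of_lt_csSup hTne
    (show L - ε/4 < L by linarith)
  set y : ℝ := max y₁ (max a (x - δ/2)) with hy
  have hyIco : y ∈ Set.Ico a x := by
    constructor
    · exact le_max_of_le_right (le_max_left _ _)
    · exact max_lt hy₁.2 (max_lt hax (by linarith))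
  have hys : y ∈ s := hmem y hyIco
  have hyx : y ≤ x := hyIco.2.le
  have hvy : L - ε/4 < v y := hwgt.trans_le (hvmono (hmem _ hy₁) hys (le_max_left _ _))
  have hclose : x - y ≤ δ/2 := by
    have : x - δ/2 ≤ y := le_max_of_le_right (le_max_right _ _)
    linarith
  refine ⟨y, hyIco, ?_⟩
  -- key: v on [y,x] at most 3ε/4
  have hvL : ∀ t, t ∈ Set.Ico a x → v t ≤ L := fun t ht => le_csSup hTbdd ⟨t, ht, rfl⟩
  have key : ∀ t, y ≤ t → t < x → variationOnFromTo φ s y t ≤ ε/4 := by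
    intro t hyt htx
    have hts : t ∈ s := hmem t ⟨hyIco.1.trans hyt, htx⟩
    have hadd := variationOnFromTo.add hlbv has hys hts
    have h1 : v t ≤ L := hvL t ⟨hyIco.1.trans hyt, htx⟩
    have heq : variationOnFromTo φ s y t = v t - v y := by
      simp only [hv]
      linarith [hadd]
    rw [heq]
    linarith
  rw [variationOnFromTo.eq_of_le φ s hyx]
  have hbound : eVariationOn φ (s ∩ Set.Icc y x) ≤ ENNReal.ofReal (ε/2) := by
    apply iSup_le
    rintro ⟨n, u, hu, hus⟩
    dsimp only
    have humem : ∀ i, u i ∈ s := fun i => (hus i).1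
    have huy : ∀ i, y ≤ u i := fun i => (hus i).2.1
    have hux : ∀ i, u i ≤ x := fun i => (hus i).2.2
    -- partial sums bound
    have partial_bound : ∀ m : ℕ, u m < x →
        (∑ i ∈ Finset.range m, edist (φ (u (i+1))) (φ (u i))) ≤ ENNReal.ofReal (ε/4) := by
      intro m hm
      have humem' : ∀ i, u (min i m) ∈ s ∩ Set.Icc y (u m) := by
        intro i
        refine ⟨humem _, huy _, hu (min_le_right i m)⟩
      have hsum : (∑ i ∈ Finset.range m, edist (φ (u (i+1))) (φ (u i)))
          = ∑ i ∈ Finset.range m, edist (φ ((fun i => u (min i m)) (i+1)))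
              (φ ((fun i => u (min i m)) i)) := by
        apply Finset.sum_congr rfl
        intro i hi
        simp only [Finset.mem_range] at hi
        dsimp only
        rw [min_eq_left hi.le, min_eq_left (Nat.succ_le_of_lt hi)]
      rw [hsum]
      have hle := eVariationOn.sum_le (f := φ) (n := m)
        (u := fun i => u (min i m)) (hu.comp (monotone_id.min monotone_const)) humem'
      refine hle.trans ?_
      have hfin : eVariationOn φ (s ∩ Set.Icc y (u m)) ≠ ⊤ :=
        hlbv y (u m) (hmem y hyIco) (hmem (u m) ⟨hyIco.1.trans (huy m), hm⟩)
      have := key (u m) (huy m) hm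
      rw [variationOnFromTo.eq_of_le φ s (huy m)] at this
      rw [← ENNReal.ofReal_toReal hfin]
      exact ENNReal.ofReal_le_ofReal (this.trans (by linarith))
    by_cases hn : u n < x
    · exact (partial_bound n hn).trans (ENNReal.ofReal_le_ofReal (by linarith))
    · have hun : x ≤ u n := not_lt.1 hn
      have hP : ∃ i, x ≤ u i := ⟨n, hun⟩
      set j := Nat.find hP with hj
      have hjx : x ≤ u j := Nat.find_spec hP
      have hujx : u j = x := le_antisymm (hux j) hjx
      have hjlt : ∀ i, i < j → u i < x := fun i hi => not_le.1 (Nat.find_min hP hi)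
      have hjn : j ≤ n := Nat.find_min' hP hun
      have heqx : ∀ i, j ≤ i → u i = x := fun i hi =>
        le_antisymm (hux i) (hjx.trans (hu hi))
      have hzero : ∀ i ∈ Finset.Ico j n, edist (φ (u (i+1))) (φ (u i)) = 0 := by
        intro i hi
        simp only [Finset.mem_Ico] at hi
        rw [heqx i hi.1, heqx (i+1) (hi.1.trans (Nat.le_succ i)), edist_self]
      have hsplit : (∑ i ∈ Finset.range n, edist (φ (u (i+1))) (φ (u i)))
          = ∑ i ∈ Finset.range j, edist (φ (u (i+1))) (φ (u i)) := by
        rw [← Finset.sum_range_add_sum_Ico _ hjn, Finset.sum_eq_zero hzero, add_zero]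
      rw [hsplit]
      rcases Nat.eq_zero_or_pos j with hj0 | hjpos
      · rw [hj0]
        simp
      · obtain ⟨j', hj'⟩ : ∃ j', j = j' + 1 := ⟨j - 1, by omega⟩
        rw [hj', Finset.sum_range_succ]
        have h1 := partial_bound j' (hjlt j' (by omega))
        have h2 : edist (φ (u (j'+1))) (φ (u j')) ≤ ENNReal.ofReal (ε/4) := by
          rw [edist_dist]
          apply ENNReal.ofReal_le_ofReal
          have hdist : dist (u j') x < δ := by
            rw [Real.dist_eq, abs_lt]
            have h3 := huy j'
            have h4 := hux j'
            constructor <;> [linarith; linarith]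
          have := hδ (humem j') hdist
          rw [heqx (j'+1) (by omega)]
          rw [dist_comm] at this
          exact this.le
        calc _ ≤ ENNReal.ofReal (ε/4) + ENNReal.ofReal (ε/4) := add_le_add h1 h2
        _ = ENNReal.ofReal (ε/2) := by rw [← ENNReal.ofReal_add (by linarith) (by linarith)]; congr 1; ring
  have := ENNReal.toReal_le_of_le_ofReal (by linarith) hbound
  linarith
noncomputable def quantInv (a b : ℝ) (q : ℝ → ℝ) (u : ℝ) : ℝ :=
  sInf {t | t ∈ Set.Icc a b ∧ u ≤ q t}

lemma quantInv_mem {a b : ℝ} (hab : a ≤ b) {q : ℝ → ℝ} {u : ℝ} (hu : u ≤ q b) :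
    quantInv a b q u ∈ Set.Icc a b := by
  have hbmem : b ∈ {t | t ∈ Set.Icc a b ∧ u ≤ q t} := ⟨Set.right_mem_Icc.2 hab, hu⟩
  have hne : {t | t ∈ Set.Icc a b ∧ u ≤ q t}.Nonempty := ⟨b, hbmem⟩
  have hbdd : BddBelow {t | t ∈ Set.Icc a b ∧ u ≤ q t} := ⟨a, fun t ht => ht.1.1⟩
  exact ⟨le_csInf hne (fun t ht => ht.1.1), csInf_le hbdd hbmem⟩

lemma quant_tendsto {a b : ℝ} (hab : a ≤ b) {q : ℝ → ℝ} (hq0 : q a = 0)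
    (hmono : MonotoneOn q (Set.Icc a b)) {γ : ℝ} (hγ : γ = q b)
    (M : ℕ → ℕ) (hMle : ∀ N, M N ≤ N)
    (hM : Filter.Tendsto (fun N : ℕ => (M N : ℝ)/N) Filter.atTop (nhds γ))
    {x : ℝ} (hx : x ∈ Set.Icc a b)
    (hlc : a < x → ∀ ε, 0 < ε → ∃ t ∈ Set.Ico a x, q x - q t < ε) :
    Filter.Tendsto (fun N : ℕ =>
      (((Finset.range (M N)).filter (fun j => quantInv a b q (γ * vdc j) < x)).card : ℝ) / N)
      Filter.atTop (nhds (q x)) := by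
  have hamem : a ∈ Set.Icc a b := Set.left_mem_Icc.2 hab
  have hbmem : b ∈ Set.Icc a b := Set.right_mem_Icc.2 hab
  have hγ0 : 0 ≤ γ := by rw [hγ, ← hq0]; exact hmono hamem hbmem hab
  have hqx0 : 0 ≤ q x := by rw [← hq0]; exact hmono hamem hx hx.1
  have hqxγ : q x ≤ γ := by rw [hγ]; exact hmono hx hbmem hx.2
  -- upper inclusion: quantInv < x → u ≤ q x
  have hupper : ∀ j : ℕ, quantInv a b q (γ * vdc j) < x → γ * vdc j ≤ q x := by
    intro j hj
    have hu : γ * vdc j ≤ q b := by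
      rw [← hγ]
      calc γ * vdc j ≤ γ * 1 := by
            apply mul_le_mul_of_nonneg_left (vdc_lt_one j).le hγ0
      _ = γ := mul_one γ
    have hne : {t | t ∈ Set.Icc a b ∧ γ * vdc j ≤ q t}.Nonempty :=
      ⟨b, Set.right_mem_Icc.2 hab, by rwa [← hγ] at hu ⊢⟩
    obtain ⟨t, ⟨htmem, htu⟩, htx⟩ := exists_lt_of_csInf_lt hne hj
    exact htu.trans (hmono htmem hx htx.le)
  rcases eq_or_lt_of_le hγ0 with hγeq | hγpos
  · -- γ = 0 : q x = 0 and counts are ≤ M N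
    have hqx : q x = 0 := le_antisymm (by rw [← hγeq] at hqxγ; exact hqxγ) hqx0
    rw [hqx]
    apply tendsto_of_abs_le (g := fun N : ℕ => (M N : ℝ)/N)
    · filter_upwards [Filter.eventually_ge_atTop 1] with N hN
      have hNpos : (0:ℝ) < N := by exact_mod_cast hN
      rw [sub_zero, abs_of_nonneg (by positivity)]
      have hcard : (((Finset.range (M N)).filter
          (fun j => quantInv a b q (γ * vdc j) < x)).card : ℝ) ≤ (M N : ℝ) := by
        exact_mod_cast (Finset.card_filter_le _ _).trans (Finset.card_range (M N)).le
      gcongr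
    · rw [← hγeq] at hM; exact hM
  · -- γ > 0
    set c : ℝ := q x / γ with hc
    have hc0 : 0 ≤ c := by positivity
    have hc1 : c ≤ 1 := by rw [hc, div_le_one hγpos]; exact hqxγ
    -- lower inclusion
    have hlower : ∀ j : ℕ, vdc j < c → quantInv a b q (γ * vdc j) < x := by
      intro j hj
      have huqx : γ * vdc j < q x := by
        rw [hc, lt_div_iff₀ hγpos] at hj
        linarith [hj]
      have hax : a < x := by
        rcases eq_or_lt_of_le hx.1 with h | h
        · exfalso
          rw [← h, hq0] at huqx
          nlinarith [vdc_nonneg j]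
        · exact h
      obtain ⟨t, htIco, htq⟩ := hlc hax (q x - γ * vdc j) (by linarith)
      have htmem : t ∈ Set.Icc a b := ⟨htIco.1, htIco.2.le.trans hx.2⟩
      have : t ∈ {t | t ∈ Set.Icc a b ∧ γ * vdc j ≤ q t} := ⟨htmem, by linarith⟩
      exact (csInf_le ⟨a, fun s hs => hs.1.1⟩ this).trans_lt htIco.2
    apply tendsto_of_abs_le (g := fun N : ℕ => (vErr N + 1)/N + |(M N : ℝ)/N - γ|)
    · filter_upwards [Filter.eventually_ge_atTop 1] with N hN
      have hNpos : (0:ℝ) < N := by exact_mod_cast hN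
      set S := ((Finset.range (M N)).filter
        (fun j => quantInv a b q (γ * vdc j) < x)).card with hS
      have hSlow : vcnt (M N) c ≤ S := by
        show ((Finset.range (M N)).filter (fun k => vdc k < c)).card ≤
          ((Finset.range (M N)).filter (fun j => quantInv a b q (γ * vdc j) < x)).card
        apply Finset.card_le_card
        intro j hj
        simp only [Finset.mem_filter, Finset.mem_range] at hj ⊢
        exact ⟨hj.1, hlower j hj.2⟩
      have hShigh : S ≤ vcnt (M N) c + 1 := by
        have hsub : (Finset.range (M N)).filter (fun j => quantInv a b q (γ * vdc j) < x) ⊆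
            ((Finset.range (M N)).filter (fun k => vdc k < c)) ∪
            ((Finset.range (M N)).filter (fun k => vdc k = c)) := by
          intro j hj
          simp only [Finset.mem_filter, Finset.mem_range, Finset.mem_union] at hj ⊢
          have hup := hupper j hj.2
          have hle : vdc j ≤ c := by rw [hc, le_div_iff₀ hγpos]; nlinarith
          rcases lt_or_eq_of_le hle with h | h
          · exact Or.inl ⟨hj.1, h⟩
          · exact Or.inr ⟨hj.1, h⟩
        have hcard1 : ((Finset.range (M N)).filter (fun k => vdc k = c)).card ≤ 1 := by
          apply Finset.card_le_one.2
          intro i hi j hj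
          simp only [Finset.mem_filter] at hi hj
          exact vdc_injective (hi.2.trans hj.2.symm)
        calc S ≤ _ := Finset.card_le_card hsub
        _ ≤ _ + _ := Finset.card_union_le _ _
        _ ≤ vcnt (M N) c + 1 := by
            unfold vcnt
            omega
      have hb1 := (vcnt_bounds (M N) c).1
      have hb2 := (vcnt_bounds (M N) c).2
      rw [min_eq_left hc1] at hb1
      rw [max_eq_left hc0] at hb2
      have hE : vErr (M N) ≤ vErr N := vErr_mono (hMle N)
      have habs1 : |(S:ℝ) - (M N : ℝ) * c| ≤ vErr N + 1 := by
        rw [abs_le]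
        have hS1 : (vcnt (M N) c : ℝ) ≤ (S:ℝ) := by exact_mod_cast hSlow
        have hS2 : (S:ℝ) ≤ (vcnt (M N) c : ℝ) + 1 := by exact_mod_cast hShigh
        constructor <;> linarith
      have hkey : (S:ℝ)/N - q x = ((S:ℝ) - (M N:ℝ)*c)/N + c * ((M N:ℝ)/N - γ) := by
        have hcγ : c * γ = q x := by rw [hc]; field_simp
        rw [← hcγ]
        field_simp
        ring
      rw [hkey]
      calc |((S:ℝ) - (M N:ℝ)*c)/N + c * ((M N:ℝ)/N - γ)|
          ≤ |((S:ℝ) - (M N:ℝ)*c)/N| + |c * ((M N:ℝ)/N - γ)| := abs_add_le _ _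
        _ ≤ (vErr N + 1)/N + |(M N : ℝ)/N - γ| := by
            apply add_le_add
            · rw [abs_div, abs_of_pos hNpos]
              gcongr
            · rw [abs_mul]
              calc |c| * |(M N:ℝ)/N - γ| ≤ 1 * |(M N:ℝ)/N - γ| := by
                    apply mul_le_mul_of_nonneg_right _ (abs_nonneg _)
                    rw [abs_of_nonneg hc0]; exact hc1
              _ = _ := one_mul _
    · have h1 : Filter.Tendsto (fun N : ℕ => |(M N : ℝ)/N - γ|) Filter.atTop (nhds 0) := by
        have := hM.sub (tendsto_const_nhds (x := γ))
        rw [sub_self] at this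
        simpa using this.abs
      simpa using tendsto_vErr_div.add h1
/-- Let `φ : [a,b] → ℝ` be right continuous and of bounded
variation, with `φ a = 0` and total variation `V_a^b φ = 1`.  Let
`v x = V_a^x φ` and `p = (v + φ)/2`, `n = (v - φ)/2`.  Then there are a
sequence `(x_k) ⊆ [a,b]` and signs `(ε_k) ⊆ {±1}` such that at every point
`x ∈ [a,b]` of continuity of `φ` the limit relations (a)–(d) hold. -/
theorem stmt17 (a b : ℝ) (hab : a < b) (φ : ℝ → ℝ)
    (hBV : BoundedVariationOn φ (Set.Icc a b))
    (hrc : ∀ x ∈ Set.Icc a b, ContinuousWithinAt φ (Set.Icc x b) x)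
    (hφa : φ a = 0) (hV : variationOnFromTo φ (Set.Icc a b) a b = 1) :
    ∃ (xs : ℕ → ℝ) (ε : ℕ → ℝ), (∀ k, xs k ∈ Set.Icc a b) ∧
      (∀ k, ε k = 1 ∨ ε k = -1) ∧
      ∀ x ∈ Set.Icc a b, ContinuousWithinAt φ (Set.Icc a b) x →
        (Tendsto (fun N : ℕ => (N : ℝ)⁻¹ *
            ∑ k ∈ Finset.range N, Set.indicator (Set.Ico a x) (fun _ => (1 : ℝ)) (xs k))
          atTop (nhds (variationOnFromTo φ (Set.Icc a b) a x))) ∧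
        (Tendsto (fun N : ℕ => (N : ℝ)⁻¹ *
            ∑ k ∈ Finset.range N, ε k * Set.indicator (Set.Ico a x) (fun _ => (1 : ℝ)) (xs k))
          atTop (nhds (φ x))) ∧
        (Tendsto (fun N : ℕ => (2 * N : ℝ)⁻¹ *
            ∑ k ∈ Finset.range N, (1 + ε k) * Set.indicator (Set.Ico a x) (fun _ => (1 : ℝ)) (xs k))
          atTop (nhds ((variationOnFromTo φ (Set.Icc a b) a x + φ x) / 2))) ∧
        (Tendsto (fun N : ℕ => (2 * N : ℝ)⁻¹ *
            ∑ k ∈ Finset.range N, (1 - ε k) * Set.indicator (Set.Ico a x) (fun _ => (1 : ℝ)) (xs k))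
          atTop (nhds ((variationOnFromTo φ (Set.Icc a b) a x - φ x) / 2))) := by
  classical
  have hlbv : LocallyBoundedVariationOn φ (Set.Icc a b) := hBV.locallyBoundedVariationOn
  have hamem : a ∈ Set.Icc a b := Set.left_mem_Icc.2 hab.le
  have hbmem : b ∈ Set.Icc a b := Set.right_mem_Icc.2 hab.le
  set v : ℝ → ℝ := fun t => variationOnFromTo φ (Set.Icc a b) a t with hvdef
  set p : ℝ → ℝ := fun t => (v t + φ t) / 2 with hpdef
  set q : ℝ → ℝ := fun t => (v t - φ t) / 2 with hqdef
  have hva : v a = 0 := variationOnFromTo.self _ _ _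
  have hvb : v b = 1 := hV
  have hpa : p a = 0 := by simp [hpdef, hva, hφa]
  have hqa : q a = 0 := by simp [hqdef, hva, hφa]
  have hpmono : MonotoneOn p (Set.Icc a b) := by
    intro x hx y hy hxy
    have habs := abs_le.1 (abs_sub_le_var hlbv hx hy hxy)
    have hadd := variationOnFromTo.add hlbv hamem hx hy
    simp only [hpdef, hvdef]
    linarith [habs.1, habs.2]
  have hqmono : MonotoneOn q (Set.Icc a b) := by
    intro x hx y hy hxy
    have habs := abs_le.1 (abs_sub_le_var hlbv hx hy hxy)
    have hadd := variationOnFromTo.add hlbv hamem hx hy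
    simp only [hqdef, hvdef]
    linarith [habs.1, habs.2]
  set α : ℝ := p b with hα
  set β : ℝ := q b with hβ
  have hαβ : α + β = 1 := by
    rw [hα, hβ, hpdef, hqdef]
    dsimp only
    rw [hvb]
    ring
  have hα0 : 0 ≤ α := by
    rw [hα, ← hpa]
    exact hpmono hamem hbmem hab.le
  have hβ0 : 0 ≤ β := by
    rw [hβ, ← hqa]
    exact hqmono hamem hbmem hab.le
  have hα1 : α ≤ 1 := by linarith
  -- index bookkeeping
  set Fp : ℕ → ℕ := Fl α with hFpdef
  set Fn : ℕ → ℕ := fun k => k - Fp k with hFndef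
  have hFp_step : ∀ k, Fp (k+1) = Fp k ∨ Fp (k+1) = Fp k + 1 := Fl_step hα0 hα1
  have hFp_le : ∀ k, Fp k ≤ k := Fl_le hα0 hα1
  have hFn_eq : ∀ k, Fn k = k - Fp k := fun k => rfl
  have hFn_step : ∀ k, Fn (k+1) = Fn k ∨ Fn (k+1) = Fn k + 1 := by
    intro k
    have h1 := hFp_step k
    have h2 := hFp_le k
    have h3 := hFp_le (k+1)
    rw [hFn_eq, hFn_eq]
    omega
  have hplus_iff : ∀ k, (Fn (k+1) = Fn k + 1) ↔ ¬(Fp (k+1) = Fp k + 1) := by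
    intro k
    have h1 := hFp_step k
    have h2 := hFp_le k
    have h3 := hFp_le (k+1)
    rw [hFn_eq, hFn_eq]
    omega
  have hFn_le : ∀ k, Fn k ≤ k := fun k => by rw [hFn_eq]; omega
  have hFn0 : Fn 0 = 0 := by
    have := hFp_le 0
    rw [hFn_eq]
    omega
  -- limits of M/N
  have hMp : Tendsto (fun N : ℕ => (Fp N : ℝ) / N) atTop (nhds α) := Fl_tendsto hα0
  have hMn : Tendsto (fun N : ℕ => (Fn N : ℝ) / N) atTop (nhds β) := by
    have h1 : Tendsto (fun N : ℕ => 1 - (Fp N : ℝ) / N) atTop (nhds (1 - α)) :=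
      tendsto_const_nhds.sub hMp
    have h2 : (1:ℝ) - α = β := by linarith
    rw [h2] at h1
    apply h1.congr'
    filter_upwards [eventually_ge_atTop 1] with N hN
    have hNpos : (0:ℝ) < N := by exact_mod_cast hN
    rw [hFn_eq, Nat.cast_sub (hFp_le N)]
    field_simp
  -- the sequences
  refine ⟨fun k => if Fp (k+1) = Fp k + 1 then quantInv a b p (α * vdc (Fp k))
      else quantInv a b q (β * vdc (Fn k)),
    fun k => if Fp (k+1) = Fp k + 1 then 1 else -1, ?_, ?_, ?_⟩
  · intro k
    dsimp only
    by_cases hk : Fp (k+1) = Fp k + 1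
    · rw [if_pos hk]
      apply quantInv_mem hab.le
      rw [← hα]
      calc α * vdc (Fp k) ≤ α * 1 := mul_le_mul_of_nonneg_left (vdc_lt_one _).le hα0
      _ = α := mul_one α
    · rw [if_neg hk]
      apply quantInv_mem hab.le
      rw [← hβ]
      calc β * vdc (Fn k) ≤ β * 1 := mul_le_mul_of_nonneg_left (vdc_lt_one _).le hβ0
      _ = β := mul_one β
  · intro k
    dsimp only
    by_cases hk : Fp (k+1) = Fp k + 1
    · exact Or.inl (if_pos hk)
    · exact Or.inr (if_neg hk)
  · intro x hx hcont
    -- left continuity inputs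
    have hlcp : a < x → ∀ ε', 0 < ε' → ∃ t ∈ Set.Ico a x, p x - p t < ε' := by
      intro hax ε' hε'
      obtain ⟨y, hy, hvar⟩ := var_left hBV hx hax hcont hε'
      refine ⟨y, hy, ?_⟩
      have hys : y ∈ Set.Icc a b := ⟨hy.1, hy.2.le.trans hx.2⟩
      have habs := abs_le.1 (abs_sub_le_var hlbv hys hx hy.2.le)
      have hadd := variationOnFromTo.add hlbv hamem hys hx
      simp only [hpdef, hvdef]
      linarith [habs.1, habs.2]
    have hlcq : a < x → ∀ ε', 0 < ε' → ∃ t ∈ Set.Ico a x, q x - q t < ε' := by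
      intro hax ε' hε'
      obtain ⟨y, hy, hvar⟩ := var_left hBV hx hax hcont hε'
      refine ⟨y, hy, ?_⟩
      have hys : y ∈ Set.Icc a b := ⟨hy.1, hy.2.le.trans hx.2⟩
      have habs := abs_le.1 (abs_sub_le_var hlbv hys hx hy.2.le)
      have hadd := variationOnFromTo.add hlbv hamem hys hx
      simp only [hqdef, hvdef]
      linarith [habs.1, habs.2]
    -- quantile counting limits
    have hquantp := quant_tendsto hab.le hpa hpmono hα Fp hFp_le hMp hx hlcp
    have hquantq := quant_tendsto hab.le hqa hqmono hβ Fn hFn_le hMn hx hlcq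
    set Pp : ℕ → Prop := fun j => quantInv a b p (α * vdc j) < x with hPp
    set Pn : ℕ → Prop := fun j => quantInv a b q (β * vdc j) < x with hPn
    set Sp : ℕ → ℕ := fun N =>
      ((Finset.range N).filter (fun k => (Fp (k+1) = Fp k + 1) ∧ Pp (Fp k))).card with hSp
    set Sn : ℕ → ℕ := fun N =>
      ((Finset.range N).filter (fun k => (Fn (k+1) = Fn k + 1) ∧ Pn (Fn k))).card with hSn
    have hcntp : ∀ N, Sp N = ((Finset.range (Fp N)).filter Pp).card := fun N =>
      count_transfer Fp (Fl_zero α) hFp_step Pp N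
    have hcntn : ∀ N, Sn N = ((Finset.range (Fn N)).filter Pn).card := fun N =>
      count_transfer Fn hFn0 hFn_step Pn N
    have hsp : Tendsto (fun N : ℕ => (Sp N : ℝ) / N) atTop (nhds (p x)) := by
      apply hquantp.congr
      intro N
      rw [hcntp N]
    have hsq : Tendsto (fun N : ℕ => (Sn N : ℝ) / N) atTop (nhds (q x)) := by
      apply hquantq.congr
      intro N
      rw [hcntn N]
    -- pointwise indicator decomposition
    have hxsa : ∀ k : ℕ, a ≤ (if Fp (k+1) = Fp k + 1 then quantInv a b p (α * vdc (Fp k))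
        else quantInv a b q (β * vdc (Fn k))) := by
      intro k
      by_cases hk : Fp (k+1) = Fp k + 1
      · rw [if_pos hk]
        exact (quantInv_mem hab.le (by
          rw [← hα]
          calc α * vdc (Fp k) ≤ α * 1 := mul_le_mul_of_nonneg_left (vdc_lt_one _).le hα0
          _ = α := mul_one α)).1
      · rw [if_neg hk]
        exact (quantInv_mem hab.le (by
          rw [← hβ]
          calc β * vdc (Fn k) ≤ β * 1 := mul_le_mul_of_nonneg_left (vdc_lt_one _).le hβ0
          _ = β := mul_one β)).1
    have hind : ∀ k : ℕ, Set.indicator (Set.Ico a x) (fun _ => (1:ℝ))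
        (if Fp (k+1) = Fp k + 1 then quantInv a b p (α * vdc (Fp k))
          else quantInv a b q (β * vdc (Fn k)))
        = (if (Fp (k+1) = Fp k + 1) ∧ Pp (Fp k) then (1:ℝ) else 0)
          + (if (Fn (k+1) = Fn k + 1) ∧ Pn (Fn k) then (1:ℝ) else 0) := by
      intro k
      rw [Set.indicator_apply]
      by_cases hk : Fp (k+1) = Fp k + 1
      · have hnk : ¬(Fn (k+1) = Fn k + 1) := by rw [hplus_iff k]; simpa using hk
        rw [if_pos hk]
        have hmem_iff : quantInv a b p (α * vdc (Fp k)) ∈ Set.Ico a x ↔ Pp (Fp k) := by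
          constructor
          · exact fun h => h.2
          · intro h
            refine ⟨?_, h⟩
            have := hxsa k
            rwa [if_pos hk] at this
        by_cases hP : Pp (Fp k)
        · rw [if_pos (hmem_iff.2 hP), if_pos ⟨hk, hP⟩, if_neg (by simp [hnk])]
          norm_num
        · rw [if_neg (fun h => hP (hmem_iff.1 h)), if_neg (by simp [hP]),
            if_neg (by simp [hnk])]
          norm_num
      · have hnk : Fn (k+1) = Fn k + 1 := by rw [hplus_iff k]; exact hk
        rw [if_neg hk]
        have hmem_iff : quantInv a b q (β * vdc (Fn k)) ∈ Set.Ico a x ↔ Pn (Fn k) := by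
          constructor
          · exact fun h => h.2
          · intro h
            refine ⟨?_, h⟩
            have := hxsa k
            rwa [if_neg hk] at this
        by_cases hP : Pn (Fn k)
        · rw [if_pos (hmem_iff.2 hP), if_neg (by simp [hk]), if_pos ⟨hnk, hP⟩]
          norm_num
        · rw [if_neg (fun h => hP (hmem_iff.1 h)), if_neg (by simp [hk]),
            if_neg (by simp [hP])]
          norm_num
    have hsgn : ∀ k : ℕ, (if Fp (k+1) = Fp k + 1 then (1:ℝ) else -1) *
        Set.indicator (Set.Ico a x) (fun _ => (1:ℝ))
          (if Fp (k+1) = Fp k + 1 then quantInv a b p (α * vdc (Fp k))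
            else quantInv a b q (β * vdc (Fn k)))
        = (if (Fp (k+1) = Fp k + 1) ∧ Pp (Fp k) then (1:ℝ) else 0)
          - (if (Fn (k+1) = Fn k + 1) ∧ Pn (Fn k) then (1:ℝ) else 0) := by
      intro k
      rw [hind k]
      by_cases hk : Fp (k+1) = Fp k + 1
      · have hnk : ¬(Fn (k+1) = Fn k + 1) := by rw [hplus_iff k]; simpa using hk
        rw [if_pos hk, if_neg (show ¬((Fn (k+1) = Fn k + 1) ∧ Pn (Fn k)) by simp [hnk])]
        ring
      · rw [if_neg hk, if_neg (show ¬((Fp (k+1) = Fp k + 1) ∧ Pp (Fp k)) by simp [hk])]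
        ring
    have hsum1 : ∀ N : ℕ, (∑ k ∈ Finset.range N, Set.indicator (Set.Ico a x) (fun _ => (1:ℝ))
        (if Fp (k+1) = Fp k + 1 then quantInv a b p (α * vdc (Fp k))
          else quantInv a b q (β * vdc (Fn k)))) = (Sp N : ℝ) + (Sn N : ℝ) := by
      intro N
      calc (∑ k ∈ Finset.range N, Set.indicator (Set.Ico a x) (fun _ => (1:ℝ))
            (if Fp (k+1) = Fp k + 1 then quantInv a b p (α * vdc (Fp k))
              else quantInv a b q (β * vdc (Fn k))))
          = ∑ k ∈ Finset.range N, ((if (Fp (k+1) = Fp k + 1) ∧ Pp (Fp k) then (1:ℝ) else 0)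
            + (if (Fn (k+1) = Fn k + 1) ∧ Pn (Fn k) then (1:ℝ) else 0)) :=
            Finset.sum_congr rfl (fun k _ => hind k)
        _ = (Sp N : ℝ) + (Sn N : ℝ) := by
            rw [Finset.sum_add_distrib, Finset.sum_boole, Finset.sum_boole, hSp, hSn]
    have hsum2 : ∀ N : ℕ, (∑ k ∈ Finset.range N,
        (if Fp (k+1) = Fp k + 1 then (1:ℝ) else -1) *
          Set.indicator (Set.Ico a x) (fun _ => (1:ℝ))
          (if Fp (k+1) = Fp k + 1 then quantInv a b p (α * vdc (Fp k))
            else quantInv a b q (β * vdc (Fn k)))) = (Sp N : ℝ) - (Sn N : ℝ) := by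
      intro N
      calc (∑ k ∈ Finset.range N, (if Fp (k+1) = Fp k + 1 then (1:ℝ) else -1) *
            Set.indicator (Set.Ico a x) (fun _ => (1:ℝ))
            (if Fp (k+1) = Fp k + 1 then quantInv a b p (α * vdc (Fp k))
              else quantInv a b q (β * vdc (Fn k))))
          = ∑ k ∈ Finset.range N, ((if (Fp (k+1) = Fp k + 1) ∧ Pp (Fp k) then (1:ℝ) else 0)
            - (if (Fn (k+1) = Fn k + 1) ∧ Pn (Fn k) then (1:ℝ) else 0)) :=
            Finset.sum_congr rfl (fun k _ => hsgn k)
        _ = (Sp N : ℝ) - (Sn N : ℝ) := by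
            rw [Finset.sum_sub_distrib, Finset.sum_boole, Finset.sum_boole, hSp, hSn]
    have hpq_v : p x + q x = v x := by
      show (v x + φ x)/2 + (v x - φ x)/2 = v x
      ring
    have hpq_φ : p x - q x = φ x := by
      show (v x + φ x)/2 - (v x - φ x)/2 = φ x
      ring
    refine ⟨?_, ?_, ?_, ?_⟩
    · have h := hsp.add hsq
      rw [hpq_v] at h
      apply h.congr
      intro N
      dsimp only
      rw [hsum1 N]
      ring
    · have h := hsp.sub hsq
      rw [hpq_φ] at h
      apply h.congr
      intro N
      dsimp only
      rw [hsum2 N]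
      ring
    · apply hsp.congr'
      filter_upwards [eventually_ge_atTop 1] with N hN
      have hNpos : (0:ℝ) < N := by exact_mod_cast hN
      have h3 : (∑ k ∈ Finset.range N,
          (1 + if Fp (k+1) = Fp k + 1 then (1:ℝ) else -1) *
            Set.indicator (Set.Ico a x) (fun _ => (1:ℝ))
            (if Fp (k+1) = Fp k + 1 then quantInv a b p (α * vdc (Fp k))
              else quantInv a b q (β * vdc (Fn k)))) = 2 * (Sp N : ℝ) := by
        have : ∀ k ∈ Finset.range N,
            (1 + if Fp (k+1) = Fp k + 1 then (1:ℝ) else -1) *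
              Set.indicator (Set.Ico a x) (fun _ => (1:ℝ))
              (if Fp (k+1) = Fp k + 1 then quantInv a b p (α * vdc (Fp k))
                else quantInv a b q (β * vdc (Fn k)))
            = Set.indicator (Set.Ico a x) (fun _ => (1:ℝ))
              (if Fp (k+1) = Fp k + 1 then quantInv a b p (α * vdc (Fp k))
                else quantInv a b q (β * vdc (Fn k)))
              + (if Fp (k+1) = Fp k + 1 then (1:ℝ) else -1) *
              Set.indicator (Set.Ico a x) (fun _ => (1:ℝ))
              (if Fp (k+1) = Fp k + 1 then quantInv a b p (α * vdc (Fp k))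
                else quantInv a b q (β * vdc (Fn k))) := by
          intro k _
          ring
        rw [Finset.sum_congr rfl this, Finset.sum_add_distrib, hsum1 N, hsum2 N]
        ring
      rw [h3]
      field_simp
    · apply hsq.congr'
      filter_upwards [eventually_ge_atTop 1] with N hN
      have hNpos : (0:ℝ) < N := by exact_mod_cast hN
      have h3 : (∑ k ∈ Finset.range N,
          (1 - if Fp (k+1) = Fp k + 1 then (1:ℝ) else -1) *
            Set.indicator (Set.Ico a x) (fun _ => (1:ℝ))
            (if Fp (k+1) = Fp k + 1 then quantInv a b p (α * vdc (Fp k))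
              else quantInv a b q (β * vdc (Fn k)))) = 2 * (Sn N : ℝ) := by
        have : ∀ k ∈ Finset.range N,
            (1 - if Fp (k+1) = Fp k + 1 then (1:ℝ) else -1) *
              Set.indicator (Set.Ico a x) (fun _ => (1:ℝ))
              (if Fp (k+1) = Fp k + 1 then quantInv a b p (α * vdc (Fp k))
                else quantInv a b q (β * vdc (Fn k)))
            = Set.indicator (Set.Ico a x) (fun _ => (1:ℝ))
              (if Fp (k+1) = Fp k + 1 then quantInv a b p (α * vdc (Fp k))
                else quantInv a b q (β * vdc (Fn k)))
              - (if Fp (k+1) = Fp k + 1 then (1:ℝ) else -1) *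
              Set.indicator (Set.Ico a x) (fun _ => (1:ℝ))
              (if Fp (k+1) = Fp k + 1 then quantInv a b p (α * vdc (Fp k))
                else quantInv a b q (β * vdc (Fn k))) := by
          intro k _
          ring
        rw [Finset.sum_congr rfl this, Finset.sum_sub_distrib, hsum1 N, hsum2 N]
        ring
      rw [h3]
      field_simp
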